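/- Suppose real polynomials P(p) = Σᵢ₌₀⁴ aᵢpⁱ and Q(q) = Σᵢ₌₀⁴ bᵢqⁱ satisfy (1-pq)²Q''(q) + 6p(1-pq)Q'(q) + 12p²Q(q) = (1-pq)²P''(p) + 6q(1-pq)P'(p) + 12q²P(p) for all real p, q. Then b₀ = a₄, b₁ = a₃, b₂ = a₂, b₃ = a₁, b₄ = a₀. Conversely, any such pair of polynomials with these coefficient relations satisfies the identity. -/

import Mathlib

lemma quartic_hasDeriv (c₀ c₁ c₂ c₃ c₄ : ℝ) (x : ℝ) :
    HasDerivAt (fun x : ℝ => c₀ + c₁*x + c₂*x^2 + c₃*x^3 + c₄*x^4)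
      (c₁ + 2*c₂*x + 3*c₃*x^2 + 4*c₄*x^3) x := by
  have h := ((((hasDerivAt_const x c₀).add ((hasDerivAt_id x).const_mul c₁)).add
      ((hasDerivAt_pow 2 x).const_mul c₂)).add ((hasDerivAt_pow 3 x).const_mul c₃)).add
      ((hasDerivAt_pow 4 x).const_mul c₄)
  convert h using 1
  · rfl
  · rfl
  · rfl
  · push_cast
    ring

lemma quartic_deriv (c₀ c₁ c₂ c₃ c₄ : ℝ) (f : ℝ → ℝ)
    (hf : ∀ x, f x = c₀ + c₁*x + c₂*x^2 + c₃*x^3 + c₄*x^4) :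
    deriv f = fun x => c₁ + 2*c₂*x + 3*c₃*x^2 + 4*c₄*x^3 := by
  have : f = fun x => c₀ + c₁*x + c₂*x^2 + c₃*x^3 + c₄*x^4 := funext hf
  subst this
  funext x
  exact (quartic_hasDeriv c₀ c₁ c₂ c₃ c₄ x).deriv

theorem stmt_2 (a₀ a₁ a₂ a₃ a₄ b₀ b₁ b₂ b₃ b₄ : ℝ)
    (P : ℝ → ℝ) (Q : ℝ → ℝ)
    (hPdef : ∀ p, P p = a₀ + a₁*p + a₂*p^2 + a₃*p^3 + a₄*p^4)
    (hQdef : ∀ q, Q q = b₀ + b₁*q + b₂*q^2 + b₃*q^3 + b₄*q^4) :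
    (∀ p q : ℝ,
      (1 - p*q)^2 * iteratedDeriv 2 Q q + 6*p*(1 - p*q) * deriv Q q + 12*p^2 * Q q =
      (1 - p*q)^2 * iteratedDeriv 2 P p + 6*q*(1 - p*q) * deriv P p + 12*q^2 * P p)
    ↔ (b₀ = a₄ ∧ b₁ = a₃ ∧ b₂ = a₂ ∧ b₃ = a₁ ∧ b₄ = a₀) := by
  have hP' := quartic_deriv a₀ a₁ a₂ a₃ a₄ P hPdef
  have hQ' := quartic_deriv b₀ b₁ b₂ b₃ b₄ Q hQdef
  have hP'' := quartic_deriv a₁ (2*a₂) (3*a₃) (4*a₄) 0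
    (fun x : ℝ => a₁ + 2*a₂*x + 3*a₃*x^2 + 4*a₄*x^3) (fun x => by ring)
  have hQ'' := quartic_deriv b₁ (2*b₂) (3*b₃) (4*b₄) 0
    (fun x : ℝ => b₁ + 2*b₂*x + 3*b₃*x^2 + 4*b₄*x^3) (fun x => by ring)
  have hI : ∀ f : ℝ → ℝ, iteratedDeriv 2 f = deriv (deriv f) := by
    intro f
    rw [show (2:ℕ) = 1+1 from rfl, iteratedDeriv_succ, iteratedDeriv_one]
  have H : ∀ p q : ℝ,
      ((1 - p*q)^2 * iteratedDeriv 2 Q q + 6*p*(1 - p*q) * deriv Q q + 12*p^2 * Q q =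
      (1 - p*q)^2 * iteratedDeriv 2 P p + 6*q*(1 - p*q) * deriv P p + 12*q^2 * P p)
      ↔ ((1 - p*q)^2 * (2*b₂ + 6*b₃*q + 12*b₄*q^2)
          + 6*p*(1 - p*q) * (b₁ + 2*b₂*q + 3*b₃*q^2 + 4*b₄*q^3)
          + 12*p^2 * (b₀ + b₁*q + b₂*q^2 + b₃*q^3 + b₄*q^4) =
        (1 - p*q)^2 * (2*a₂ + 6*a₃*p + 12*a₄*p^2)
          + 6*q*(1 - p*q) * (a₁ + 2*a₂*p + 3*a₃*p^2 + 4*a₄*p^3)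
          + 12*q^2 * (a₀ + a₁*p + a₂*p^2 + a₃*p^3 + a₄*p^4)) := by
    intro p q
    simp only [hI, hP', hQ', hP'', hQ'', hPdef, hQdef]
    constructor <;> intro h <;> linear_combination h
  constructor
  · intro h
    have h1 := (H 0 0).mp (h 0 0)
    have h2 := (H 0 1).mp (h 0 1)
    have h3 := (H 0 (-1)).mp (h 0 (-1))
    have h4 := (H 1 0).mp (h 1 0)
    have h5 := (H (-1) 0).mp (h (-1) 0)
    norm_num at h1 h2 h3 h4 h5
    refine ⟨by linarith, by linarith, by linarith, by linarith, by linarith⟩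
  · rintro ⟨rfl, rfl, rfl, rfl, rfl⟩ p q
    rw [(H p q)]
    ring
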